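/- Let G be the structure group of a finite RC-quasigroup of size n and class p ≥ 2. The congruence ≡ on G (extending the mod-p congruence on M via central powers of Δ) has exactly pⁿ classes, and its kernel (the ≡-class of 1) is the free Abelian subgroup of G generated by the n elements x^{[p]}, x ∈ X. Hence there is a short exact sequence 1 → ℤⁿ → G → W → 1 with W = G/≡ of order pⁿ. -/

import Mathlib

/-- `PiAux op l y` is `Π_{r+1}(x₁, ..., x_r, y)` where `l = [x_r, ..., x₁]`. -/
def PiAux {X : Type*} (op : X → X → X) : List X → X → X
  | [], y => y
  | a :: l, y => op (PiAux op l a) (PiAux op l y)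

/-- `SigmaRev op l` is the list of letters of the word `Σ_r(x₁, ..., x_r)` for
`l = [x_r, ..., x₁]` the reversed argument list. -/
def SigmaRev {X : Type*} (op : X → X → X) : List X → List X
  | [] => []
  | a :: l => SigmaRev op l ++ [PiAux op l a]

/-- The relators `x(x ⊳ y)(y(y ⊳ x))⁻¹` presenting the structure group of `(X, ⊳)`. -/
def structGroupRels {X : Type*} (op : X → X → X) : Set (FreeGroup X) :=
  { r | ∃ x y : X, r = FreeGroup.of x * FreeGroup.of (op x y)
      * (FreeGroup.of y * FreeGroup.of (op y x))⁻¹ }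

set_option linter.unusedSectionVars false

namespace Stmt16

variable {X : Type*} [Fintype X] [DecidableEq X]

/-- inverse of left translation -/
noncomputable def rho (op : X → X → X) (hL : ∀ x : X, Function.Bijective (op x)) (x : X) :
    Equiv.Perm X := (Equiv.ofBijective (op x) (hL x)).symm

variable (op : X → X → X) (hL : ∀ x : X, Function.Bijective (op x))

lemma rho_op (x y : X) : rho op hL x (op x y) = y := by
  rw [rho, Equiv.symm_apply_eq]; rfl

lemma op_rho (x y : X) : op x (rho op hL x y) = y :=
  (Equiv.ofBijective (op x) (hL x)).apply_symm_apply y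

lemma rho_swap (hRC : ∀ x y z : X, op (op x y) (op x z) = op (op y x) (op y z))
    (u v : X) : rho op hL u * rho op hL (op u v) = rho op hL v * rho op hL (op v u) := by
  ext z
  have h1 : ∀ a b w, op (op a b) (op a (rho op hL a (rho op hL (op a b) w))) = w := by
    intro a b w
    rw [op_rho op hL, op_rho op hL]
  have key : op (op u v) (op u ((rho op hL u * rho op hL (op u v)) z))
      = op (op u v) (op u ((rho op hL v * rho op hL (op v u)) z)) := by
    simp only [Equiv.Perm.mul_apply]
    rw [h1 u v z, hRC u v, h1 v u z]
  have i1 := (hL (op u v)).injective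
  have i2 := (hL u).injective
  exact i2 (i1 key)

/-- action of permutations on integer vectors -/
def pact (σ : Equiv.Perm X) (v : X → ℤ) : X → ℤ := v ∘ σ.symm

@[simp] lemma pact_apply (σ : Equiv.Perm X) (v : X → ℤ) (y : X) :
    pact σ v y = v (σ.symm y) := rfl

@[simp] lemma pact_one (v : X → ℤ) : pact (1 : Equiv.Perm X) v = v := rfl

lemma pact_mul (σ τ : Equiv.Perm X) (v : X → ℤ) :
    pact (σ * τ) v = pact σ (pact τ v) := rfl

@[simp] lemma pact_add (σ : Equiv.Perm X) (v w : X → ℤ) :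
    pact σ (v + w) = pact σ v + pact σ w := rfl

@[simp] lemma pact_neg (σ : Equiv.Perm X) (v : X → ℤ) : pact σ (-v) = -pact σ v := rfl

@[simp] lemma pact_zero (σ : Equiv.Perm X) : pact σ (0 : X → ℤ) = 0 := rfl

@[simp] lemma pact_const (σ : Equiv.Perm X) (k : ℤ) :
    pact σ (fun _ => k) = fun _ => k := rfl

@[simp] lemma pact_single (σ : Equiv.Perm X) (x : X) (k : ℤ) :
    pact σ (Pi.single x k) = Pi.single (σ x) k := by
  funext y
  rcases eq_or_ne y (σ x) with h | h
  · subst h; rw [pact_apply, Equiv.symm_apply_apply, Pi.single_eq_same, Pi.single_eq_same]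
  · rw [pact_apply, Pi.single_eq_of_ne h, Pi.single_eq_of_ne]
    intro hc
    exact h (by rw [← hc]; simp)

lemma pact_nonneg (σ : Equiv.Perm X) {v : X → ℤ} (h : 0 ≤ v) : 0 ≤ pact σ v :=
  fun y => h (σ.symm y)

/-- product of images of the letters of a word -/
def PF {M : Type*} [Monoid M] (F : X → M) (l : List X) : M := (l.map F).prod

@[simp] lemma PF_nil {M : Type*} [Monoid M] (F : X → M) : PF F [] = 1 := rfl

@[simp] lemma PF_cons {M : Type*} [Monoid M] (F : X → M) (x : X) (l : List X) :
    PF F (x :: l) = F x * PF F l := by simp [PF]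

lemma PF_append {M : Type*} [Monoid M] (F : X → M) (l m : List X) :
    PF F (l ++ m) = PF F l * PF F m := by simp [PF]

@[simp] lemma PF_singleton {M : Type*} [Monoid M] (F : X → M) (x : X) :
    PF F [x] = F x := by simp [PF]

/-- the vector (abelianization image) of a word -/
noncomputable def Vv : List X → X → ℤ
  | [] => 0
  | x :: l => Pi.single x 1 + pact (rho op hL x) (Vv l)

@[simp] lemma Vv_nil : Vv op hL [] = 0 := rfl

lemma Vv_cons (x : X) (l : List X) :
    Vv op hL (x :: l) = Pi.single x 1 + pact (rho op hL x) (Vv op hL l) := rfl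

lemma Vv_nonneg (l : List X) : 0 ≤ Vv op hL l := by
  induction l with
  | nil => exact le_refl _
  | cons x l ih =>
      rw [Vv_cons]
      intro y
      have h1 : (0:ℤ) ≤ (Pi.single x 1 : X → ℤ) y := by
        rcases eq_or_ne y x with h | h
        · subst h; simp
        · rw [Pi.single_eq_of_ne h]
      have h2 := pact_nonneg (rho op hL x) ih y
      simpa using add_nonneg h1 h2

lemma Vv_append (l m : List X) :
    Vv op hL (l ++ m) = Vv op hL l + pact (PF (rho op hL) l) (Vv op hL m) := by
  induction l with
  | nil => simp
  | cons x l ih =>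
      simp only [List.cons_append, Vv_cons, ih, PF_cons, pact_mul, pact_add, add_assoc]

end Stmt16
section Part2

namespace Stmt16

set_option linter.unusedSectionVars false

variable {X : Type*} [Fintype X] [DecidableEq X]
variable (op : X → X → X) (hL : ∀ x : X, Function.Bijective (op x))

lemma rho_symm_apply (x z : X) : (rho op hL x).symm z = op x z := rfl

lemma pact_injective (σ : Equiv.Perm X) : Function.Injective (pact σ) := by
  intro v w h
  funext z
  have := congrFun h (σ z)
  simpa [pact_apply, Equiv.symm_apply_apply] using this

lemma Vv_sum (l : List X) : ∑ x, Vv op hL l x = l.length := by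
  induction l with
  | nil => simp
  | cons x l ih =>
      simp only [Vv_cons, Pi.add_apply, Finset.sum_add_distrib, List.length_cons]
      have h1 : ∑ y, (Pi.single x (1:ℤ) : X → ℤ) y = 1 := by simp
      have h2 : ∑ y, pact (rho op hL x) (Vv op hL l) y = ∑ y, Vv op hL l y :=
        Equiv.sum_comp (rho op hL x).symm (Vv op hL l)
      rw [h1, h2, ih]; push_cast; ring

lemma Vv_head_pos (x : X) (t : List X) : 1 ≤ Vv op hL (x :: t) x := by
  have h : (0:ℤ) ≤ pact (rho op hL x) (Vv op hL t) x :=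
    pact_nonneg (rho op hL x) (Vv_nonneg op hL t) x
  have h2 : Vv op hL (x :: t) x = 1 + pact (rho op hL x) (Vv op hL t) x := by
    simp [Vv_cons]
  omega

lemma Vv_eq_nil {l : List X} (h : Vv op hL l = 0) : l = [] := by
  cases l with
  | nil => rfl
  | cons x t =>
      exfalso
      have := Vv_head_pos op hL x t
      rw [h] at this
      simp at this

lemma Vv_cons_cancel {x : X} {t t' : List X}
    (h : Vv op hL (x :: t) = Vv op hL (x :: t')) : Vv op hL t = Vv op hL t' := by
  rw [Vv_cons, Vv_cons] at h
  exact pact_injective _ (add_left_cancel h)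

lemma swap_V (hRC : ∀ x y z : X, op (op x y) (op x z) = op (op y x) (op y z))
    (x z : X) (s : List X) :
    Vv op hL (x :: op x z :: s) = Vv op hL (z :: op z x :: s) := by
  simp only [Vv_cons, pact_add, pact_single, ← pact_mul]
  rw [rho_op op hL x z, rho_op op hL z x, rho_swap op hL hRC x z]
  abel

lemma swap_P {M : Type*} [Monoid M] (F : X → M)
    (hF : ∀ u v : X, F u * F (op u v) = F v * F (op v u)) (x z : X) (s : List X) :
    PF F (x :: op x z :: s) = PF F (z :: op z x :: s) := by
  simp only [PF_cons, ← mul_assoc, hF x z]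

lemma headExchange (hRC : ∀ x y z : X, op (op x y) (op x z) = op (op y x) (op y z))
    {M : Type*} [Monoid M] (F : X → M)
    (hF : ∀ u v : X, F u * F (op u v) = F v * F (op v u)) :
    ∀ (l : List X) (z : X), 1 ≤ Vv op hL l z →
    ∃ t, Vv op hL (z :: t) = Vv op hL l ∧ PF F (z :: t) = PF F l := by
  intro l
  induction l with
  | nil => intro z h; simp at h
  | cons x t ih =>
      intro z h
      rcases eq_or_ne x z with rfl | hne
      · exact ⟨t, rfl, rfl⟩
      · have h0 : (Pi.single x (1:ℤ) : X → ℤ) z = 0 := Pi.single_eq_of_ne (Ne.symm hne) 1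
        have h1 : 1 ≤ Vv op hL t (op x z) := by
          have : Vv op hL (x :: t) z
              = (Pi.single x (1:ℤ) : X → ℤ) z + Vv op hL t (op x z) := by
            rw [Vv_cons]; simp [pact_apply, rho_symm_apply]
          omega
        obtain ⟨t₁, hV, hP⟩ := ih (op x z) h1
        refine ⟨op z x :: t₁, ?_, ?_⟩
        · rw [← swap_V op hL hRC x z t₁]
          rw [Vv_cons, Vv_cons op hL x t, hV]
        · rw [← swap_P op F hF x z t₁]
          rw [PF_cons, PF_cons F x t, hP]

lemma PF_well_defined (hRC : ∀ x y z : X, op (op x y) (op x z) = op (op y x) (op y z))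
    {M : Type*} [Monoid M] (F : X → M)
    (hF : ∀ u v : X, F u * F (op u v) = F v * F (op v u)) :
    ∀ (n : ℕ) (l l' : List X), l.length = n →
    Vv op hL l = Vv op hL l' → PF F l = PF F l' := by
  intro n
  induction n with
  | zero =>
      intro l l' hlen hV
      have hl : l = [] := List.length_eq_zero_iff.mp hlen
      subst hl
      have : l' = [] := Vv_eq_nil op hL (by rw [← hV]; rfl)
      subst this; rfl
  | succ n ih =>
      intro l l' hlen hV
      cases l with
      | nil => simp at hlen
      | cons x t =>
        cases l' with
        | nil =>
            exfalso
            have := Vv_head_pos op hL x t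
            rw [hV] at this; simp at this
        | cons x' t' =>
          rcases eq_or_ne x x' with rfl | hne
          · have hVt : Vv op hL t = Vv op hL t' := Vv_cons_cancel op hL hV
            have hlt : t.length = n := by simpa using hlen
            rw [PF_cons, PF_cons, ih t t' hlt hVt]
          · -- x ≠ x'
            have hx' : 1 ≤ Vv op hL t (op x x') := by
              have e1 : Vv op hL (x :: t) x'
                  = (Pi.single x (1:ℤ) : X → ℤ) x' + Vv op hL t (op x x') := by
                rw [Vv_cons]; simp [pact_apply, rho_symm_apply]
              have e2 : (Pi.single x (1:ℤ) : X → ℤ) x' = 0 :=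
                Pi.single_eq_of_ne (Ne.symm hne) 1
              have e3 : 1 ≤ Vv op hL (x :: t) x' := by
                rw [hV]; exact Vv_head_pos op hL x' t'
              omega
            obtain ⟨s, hVs, hPs⟩ := headExchange op hL hRC F hF t (op x x') hx'
            have hc1 : Vv op hL (x :: op x x' :: s) = Vv op hL (x :: t) := by
              rw [Vv_cons op hL x (op x x' :: s), hVs, Vv_cons]
            have hV2 : Vv op hL (x :: t) = Vv op hL (x' :: op x' x :: s) :=
              hc1.symm.trans (swap_V op hL hRC x x' s)
            have hc2 : PF F (x :: op x x' :: s) = PF F (x :: t) := by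
              rw [PF_cons F x (op x x' :: s), hPs, PF_cons]
            have hP2 : PF F (x :: t) = PF F (x' :: op x' x :: s) :=
              hc2.symm.trans (swap_P op F hF x x' s)
            have hVtail : Vv op hL (op x' x :: s) = Vv op hL t' :=
              Vv_cons_cancel op hL (hV2.symm.trans hV)
            have hlentail : (op x' x :: s).length = n := by
              have hs := Vv_sum op hL (op x' x :: s)
              rw [hVtail, Vv_sum op hL t'] at hs
              have h6 := Vv_sum op hL (x' :: t')
              rw [← hV, Vv_sum op hL (x :: t)] at h6
              simp only [List.length_cons] at hs h6 hlen ⊢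
              omega
            rw [hP2, PF_cons, ih _ _ hlentail hVtail, PF_cons]

lemma PF_eq_of_Vv_eq (hRC : ∀ x y z : X, op (op x y) (op x z) = op (op y x) (op y z))
    {M : Type*} [Monoid M] (F : X → M)
    (hF : ∀ u v : X, F u * F (op u v) = F v * F (op v u))
    {l l' : List X} (hV : Vv op hL l = Vv op hL l') :
    PF F l = PF F l' :=
  PF_well_defined op hL hRC F hF l.length l l' rfl hV

lemma Vv_exists : ∀ (n : ℕ) (v : X → ℤ), 0 ≤ v → ∑ x, v x = n →
    ∃ l : List X, Vv op hL l = v := by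
  intro n
  induction n with
  | zero =>
      intro v hv hsum
      refine ⟨[], ?_⟩
      rw [Vv_nil]
      funext y
      have h1 : 0 ≤ v y := hv y
      have h3 : v y ≤ ∑ x, v x := Finset.single_le_sum (fun i _ => hv i) (Finset.mem_univ y)
      have hsum' : ∑ x, v x = 0 := by exact_mod_cast hsum
      simp only [Pi.zero_apply]
      omega
  | succ n ih =>
      intro v hv hsum
      have hex : ∃ x, 1 ≤ v x := by
        by_contra hc
        push_neg at hc
        have h0 : ∑ x, v x ≤ 0 := Finset.sum_nonpos (fun i _ => by have := hc i; omega)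
        have hsum' : ∑ x, v x = (n:ℤ) + 1 := by push_cast at hsum ⊢; omega
        omega
      obtain ⟨x, hx⟩ := hex
      set w := pact (rho op hL x)⁻¹ (v - (Pi.single x 1 : X → ℤ)) with hw
      have hsub : 0 ≤ v - (Pi.single x 1 : X → ℤ) := by
        intro y
        rcases eq_or_ne y x with rfl | hne
        · simp; omega
        · have := hv y
          simp [Pi.single_eq_of_ne hne] at this ⊢
          omega
      have hwn : 0 ≤ w := pact_nonneg _ hsub
      have hwsum : ∑ y, w y = n := by
        have h2 : ∑ y, w y = ∑ y, (v - (Pi.single x 1 : X → ℤ)) y :=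
          Equiv.sum_comp ((rho op hL x)⁻¹).symm (v - (Pi.single x 1 : X → ℤ))
        have h3 : ∑ y, (v - (Pi.single x 1 : X → ℤ)) y = (∑ y, v y) - 1 := by
          simp only [Pi.sub_apply, Finset.sum_sub_distrib]
          have : ∑ y, (Pi.single x (1:ℤ) : X → ℤ) y = 1 := by simp
          rw [this]
        rw [h2, h3, hsum]; push_cast; ring
      obtain ⟨t, ht⟩ := ih w hwn hwsum
      refine ⟨x :: t, ?_⟩
      rw [Vv_cons, ht, hw, ← pact_mul, mul_inv_cancel, pact_one]
      abel

end Stmt16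

end Part2
section Part3

namespace Stmt16

set_option linter.unusedSectionVars false
open scoped Classical

variable {X : Type*} [Fintype X] [DecidableEq X]
variable (op : X → X → X) (hL : ∀ x : X, Function.Bijective (op x))

/-- lift of a word-product map to nonnegative vectors (junk value elsewhere) -/
noncomputable def liftF {M : Type*} [Monoid M] (F : X → M) (v : X → ℤ) : M :=
  if h : ∃ l : List X, Vv op hL l = v then PF F h.choose else 1

def onevec : X → ℤ := fun _ => 1

def cvec (k : ℕ) : X → ℤ := fun _ => (k : ℤ)

noncomputable def Mneg (v : X → ℤ) : ℕ := ∑ x, (-(v x)).toNat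

noncomputable def extF {M : Type*} [Group M] (F : X → M) (v : X → ℤ) : M :=
  liftF op hL F (v + cvec (Mneg v)) * (liftF op hL F onevec) ^ (-(Mneg v : ℤ))

@[simp] lemma cvec_zero : (cvec 0 : X → ℤ) = 0 := by funext; simp [cvec]

lemma cvec_succ (k : ℕ) : (cvec (k+1) : X → ℤ) = cvec k + onevec := by
  funext y
  show ((k+1:ℕ):ℤ) = (k:ℤ) + 1
  push_cast; ring

lemma cvec_add (k m : ℕ) : (cvec (k+m) : X → ℤ) = cvec k + cvec m := by
  funext y
  show ((k+m:ℕ):ℤ) = (k:ℤ) + (m:ℤ)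
  push_cast; ring

@[simp] lemma pact_cvec (σ : Equiv.Perm X) (k : ℕ) : pact σ (cvec k) = cvec k := rfl

@[simp] lemma pact_onevec (σ : Equiv.Perm X) : pact σ (onevec : X → ℤ) = onevec := rfl

lemma cvec_nonneg (k : ℕ) : (0 : X → ℤ) ≤ cvec k := fun _ => by simp [cvec]

lemma onevec_nonneg : (0 : X → ℤ) ≤ onevec := fun _ => by simp [onevec]

lemma Mneg_spec (v : X → ℤ) : 0 ≤ v + cvec (Mneg v) := by
  intro y
  have h1 : (-(v y)).toNat ≤ ∑ x, (-(v x)).toNat :=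
    Finset.single_le_sum (f := fun x => (-(v x)).toNat) (fun i _ => Nat.zero_le _)
      (Finset.mem_univ y)
  have h2 : -(v y) ≤ ((-(v y)).toNat : ℤ) := Int.self_le_toNat _
  have h3 : ((-(v y)).toNat : ℤ) ≤ ((Mneg v : ℕ) : ℤ) := by exact_mod_cast h1
  simp only [Pi.add_apply, Pi.zero_apply, cvec]
  omega

variable (hRC : ∀ x y z : X, op (op x y) (op x z) = op (op y x) (op y z))

include hRC

section GenF

variable {M : Type*} [Monoid M] (F : X → M)
  (hF : ∀ u v : X, F u * F (op u v) = F v * F (op v u))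

include hF

lemma liftF_Vv (l : List X) : liftF op hL F (Vv op hL l) = PF F l := by
  rw [liftF, dif_pos ⟨l, rfl⟩]
  exact PF_eq_of_Vv_eq op hL hRC F hF (Exists.choose_spec (⟨l, rfl⟩ : ∃ l', Vv op hL l' = Vv op hL l))

lemma liftF_zero : liftF op hL F (0 : X → ℤ) = 1 := by
  have : Vv op hL ([] : List X) = 0 := rfl
  rw [← this, liftF_Vv op hL hRC F hF, PF_nil]

omit hRC hF in
lemma exists_list {v : X → ℤ} (hv : 0 ≤ v) : ∃ l : List X, Vv op hL l = v := by
  have hsum : 0 ≤ ∑ x, v x := Finset.sum_nonneg (fun i _ => hv i)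
  exact Vv_exists op hL (∑ x, v x).toNat v hv (Int.toNat_of_nonneg hsum).symm

lemma liftF_add_onevec {v : X → ℤ} (hv : 0 ≤ v) :
    liftF op hL F (v + onevec) = liftF op hL F v * liftF op hL F onevec := by
  obtain ⟨l, hl⟩ := exists_list op hL hv
  obtain ⟨m, hm⟩ := exists_list op hL (onevec_nonneg (X := X))
  have happ : Vv op hL (l ++ m) = v + onevec := by
    rw [Vv_append, hl, hm, pact_onevec]
  rw [← happ, ← hl, ← hm, liftF_Vv op hL hRC F hF, liftF_Vv op hL hRC F hF,
    liftF_Vv op hL hRC F hF, PF_append]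

lemma liftF_add_cvec {v : X → ℤ} (hv : 0 ≤ v) (k : ℕ) :
    liftF op hL F (v + cvec k) = liftF op hL F v * (liftF op hL F onevec) ^ k := by
  induction k with
  | zero => simp
  | succ k ih =>
      have hvk : 0 ≤ v + cvec k := fun y => by
        have h1 := hv y
        have h2 := cvec_nonneg (X := X) k y
        simp only [Pi.add_apply, Pi.zero_apply] at *
        omega
      rw [cvec_succ, ← add_assoc, liftF_add_onevec op hL hRC F hF hvk, ih, pow_succ,
        mul_assoc]

lemma liftF_cvec (k : ℕ) :
    liftF op hL F (cvec k : X → ℤ) = (liftF op hL F onevec) ^ k := by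
  have := liftF_add_cvec op hL hRC F hF (le_refl (0 : X → ℤ)) k
  simpa [liftF_zero op hL hRC F hF] using this

/-- the key monoid-level multiplicativity -/
lemma liftF_mul {v w : X → ℤ} (hv : 0 ≤ v) (hw : 0 ≤ w) :
    liftF op hL F (v + pact (liftF op hL (rho op hL) v) w)
      = liftF op hL F v * liftF op hL F w := by
  obtain ⟨l, hl⟩ := exists_list op hL hv
  obtain ⟨m, hm⟩ := exists_list op hL hw
  have hrho : liftF op hL (rho op hL) v = PF (rho op hL) l := by
    rw [← hl]; exact liftF_Vv op hL hRC (rho op hL) (rho_swap op hL hRC) l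
  have happ : Vv op hL (l ++ m) = v + pact (liftF op hL (rho op hL) v) w := by
    rw [Vv_append, hl, hm, hrho]
  rw [← happ, ← hl, ← hm, liftF_Vv op hL hRC F hF, liftF_Vv op hL hRC F hF,
    liftF_Vv op hL hRC F hF, PF_append]

lemma liftF_conj {w : X → ℤ} (hw : 0 ≤ w) (k : ℕ) :
    (liftF op hL F onevec) ^ k * liftF op hL F (pact (liftF op hL (rho op hL) (cvec k))⁻¹ w)
      = liftF op hL F w * (liftF op hL F onevec) ^ k := by
  have hw' : 0 ≤ pact (liftF op hL (rho op hL) (cvec k))⁻¹ w := pact_nonneg _ hw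
  have h1 := liftF_mul op hL hRC F hF (cvec_nonneg (X := X) k) hw'
  rw [← pact_mul, mul_inv_cancel, pact_one, add_comm,
    liftF_add_cvec op hL hRC F hF hw k, liftF_cvec op hL hRC F hF k] at h1
  exact h1.symm

end GenF

section GenFGroup

variable {M : Type*} [Group M] (F : X → M)
  (hF : ∀ u v : X, F u * F (op u v) = F v * F (op v u))

include hF

omit hRC hF in
lemma cvec_mono (v : X → ℤ) (m j : ℕ) (hm : 0 ≤ v + cvec m) : 0 ≤ v + cvec (m + j) := by
  intro y
  have h1 := hm y
  simp only [Pi.add_apply, Pi.zero_apply, cvec] at h1 ⊢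
  push_cast at h1 ⊢
  omega

lemma extF_spec (v : X → ℤ) (k : ℕ) (hk : 0 ≤ v + cvec k) :
    extF op hL F v = liftF op hL F (v + cvec k) * (liftF op hL F onevec) ^ (-(k:ℤ)) := by
  set E : ℕ → M := fun m => liftF op hL F (v + cvec m) * (liftF op hL F onevec) ^ (-(m:ℤ))
    with hE
  have step : ∀ m, 0 ≤ v + cvec m → E (m+1) = E m := by
    intro m hm
    show liftF op hL F (v + cvec (m+1)) * (liftF op hL F onevec) ^ (-((m+1:ℕ):ℤ))
      = liftF op hL F (v + cvec m) * (liftF op hL F onevec) ^ (-(m:ℤ))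
    rw [cvec_succ, ← add_assoc, liftF_add_onevec op hL hRC F hF hm,
      show (-((m+1:ℕ):ℤ)) = (-1) + (-(m:ℤ)) by push_cast; ring, zpow_add, zpow_neg_one]
    group
  have chain : ∀ (j m : ℕ), 0 ≤ v + cvec m → E (m + j) = E m := by
    intro j
    induction j with
    | zero => intro m hm; rw [Nat.add_zero]
    | succ j ih =>
        intro m hm
        rw [Nat.add_succ, step (m+j) (cvec_mono v m j hm), ih m hm]
  have e1 : E (Mneg v) = E k := by
    rw [← chain k (Mneg v) (Mneg_spec v), ← chain (Mneg v) k hk, Nat.add_comm]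
  exact e1

lemma extF_of_nonneg {v : X → ℤ} (hv : 0 ≤ v) :
    extF op hL F v = liftF op hL F v := by
  have h0 : 0 ≤ v + cvec 0 := by simpa using hv
  rw [extF_spec op hL hRC F hF v 0 h0]
  simp

/-- THE cocycle multiplicativity at the level of `ℤ`-vectors -/
lemma extF_mul (a b : X → ℤ) :
    extF op hL F (a + pact (extF op hL (rho op hL) a) b)
      = extF op hL F a * extF op hL F b := by
  have hρ := rho_swap op hL hRC
  have hdpos : 0 ≤ pact (liftF op hL (rho op hL) (cvec (Mneg a)))⁻¹ (b + cvec (Mneg b)) :=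
    pact_nonneg _ (Mneg_spec b)
  have hva : 0 ≤ a + cvec (Mneg a) := Mneg_spec a
  have hlamfact : liftF op hL (rho op hL) (a + cvec (Mneg a))
      * (liftF op hL (rho op hL) (cvec (Mneg a)))⁻¹ = extF op hL (rho op hL) a := by
    simp only [extF, liftF_cvec op hL hRC (rho op hL) hρ (Mneg a)]
    rw [← zpow_natCast (liftF op hL (rho op hL) onevec) (Mneg a), ← zpow_neg]
  have claim1 : a + pact (extF op hL (rho op hL) a) b + cvec (Mneg a + Mneg b)
      = (a + cvec (Mneg a)) + pact (liftF op hL (rho op hL) (a + cvec (Mneg a)))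
          (pact (liftF op hL (rho op hL) (cvec (Mneg a)))⁻¹ (b + cvec (Mneg b))) := by
    rw [← pact_mul, hlamfact, pact_add, pact_cvec, cvec_add]
    abel
  have hMneg' : 0 ≤ (a + pact (extF op hL (rho op hL) a) b) + cvec (Mneg a + Mneg b) := by
    have h9 := add_nonneg hva
      (pact_nonneg (liftF op hL (rho op hL) (a + cvec (Mneg a))) hdpos)
    rw [← claim1] at h9
    exact h9
  rw [extF_spec op hL hRC F hF _ (Mneg a + Mneg b) hMneg', claim1,
    liftF_mul op hL hRC F hF hva hdpos]
  have hconj := liftF_conj op hL hRC F hF (Mneg_spec b) (Mneg a)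
  have hdval : liftF op hL F
        (pact (liftF op hL (rho op hL) (cvec (Mneg a)))⁻¹ (b + cvec (Mneg b)))
      = (liftF op hL F onevec ^ (Mneg a))⁻¹ * (liftF op hL F (b + cvec (Mneg b))
        * liftF op hL F onevec ^ (Mneg a)) := by
    rw [eq_inv_mul_iff_mul_eq]
    exact hconj
  rw [hdval, extF_spec op hL hRC F hF a (Mneg a) (Mneg_spec a),
    extF_spec op hL hRC F hF b (Mneg b) (Mneg_spec b)]
  push_cast
  group

end GenFGroup

end Stmt16

end Part3
section Part4

namespace Stmt16

set_option linter.unusedSectionVars false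
open scoped Classical

variable {X : Type*} [Fintype X] [DecidableEq X]

/-- the semidirect product `ℤ^X ⋊ Sym(X)` -/
@[ext] structure Wr (X : Type*) where
  v : X → ℤ
  s : Equiv.Perm X

instance : Mul (Wr X) := ⟨fun g h => ⟨g.v + pact g.s h.v, g.s * h.s⟩⟩
instance : One (Wr X) := ⟨⟨0, 1⟩⟩
instance : Inv (Wr X) := ⟨fun g => ⟨-pact g.s⁻¹ g.v, g.s⁻¹⟩⟩

@[simp] lemma Wr_mul_v (g h : Wr X) : (g * h).v = g.v + pact g.s h.v := rfl
@[simp] lemma Wr_mul_s (g h : Wr X) : (g * h).s = g.s * h.s := rfl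
@[simp] lemma Wr_one_v : (1 : Wr X).v = 0 := rfl
@[simp] lemma Wr_one_s : (1 : Wr X).s = 1 := rfl
@[simp] lemma Wr_inv_v (g : Wr X) : (g⁻¹).v = -pact g.s⁻¹ g.v := rfl
@[simp] lemma Wr_inv_s (g : Wr X) : (g⁻¹).s = g.s⁻¹ := rfl

instance : Group (Wr X) where
  mul_assoc a b c := by
    refine Wr.ext ?_ ?_
    · simp [pact_mul, add_assoc]
    · simp [mul_assoc]
  one_mul a := by refine Wr.ext ?_ ?_ <;> simp
  mul_one a := by refine Wr.ext ?_ ?_ <;> simp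
  inv_mul_cancel a := by
    refine Wr.ext ?_ ?_
    · simp [← pact_mul]
    · simp

variable (op : X → X → X) (hL : ∀ x : X, Function.Bijective (op x))
  (hRC : ∀ x y z : X, op (op x y) (op x z) = op (op y x) (op y z))

include hRC

omit hRC in
/-- generator images in `Wr` -/
noncomputable def fWr (x : X) : Wr X := ⟨Pi.single x 1, rho op hL x⟩

lemma fWr_rel (u v : X) :
    fWr op hL u * fWr op hL (op u v) = fWr op hL v * fWr op hL (op v u) := by
  refine Wr.ext ?_ ?_
  · show Pi.single u 1 + pact (rho op hL u) (Pi.single (op u v) 1)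
      = Pi.single v 1 + pact (rho op hL v) (Pi.single (op v u) 1)
    rw [pact_single, pact_single, rho_op op hL, rho_op op hL, add_comm]
  · exact rho_swap op hL hRC u v

lemma relations_hold : ∀ r ∈ structGroupRels op,
    (FreeGroup.lift (fWr op hL)) r = 1 := by
  rintro r ⟨x, y, rfl⟩
  rw [map_mul, map_inv, map_mul, map_mul, FreeGroup.lift_apply_of, FreeGroup.lift_apply_of,
    FreeGroup.lift_apply_of, FreeGroup.lift_apply_of, mul_inv_eq_one]
  exact fWr_rel op hL hRC x y

/-- the homomorphism `G → ℤ^X ⋊ Sym(X)` -/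
noncomputable def Phi : PresentedGroup (structGroupRels op) →* Wr X :=
  PresentedGroup.toGroup (relations_hold op hL hRC)

@[simp] lemma Phi_of (x : X) :
    Phi op hL hRC (PresentedGroup.of x) = ⟨Pi.single x 1, rho op hL x⟩ :=
  PresentedGroup.toGroup.of (relations_hold op hL hRC)

omit hRC in
/-- generators of the presented group -/
noncomputable def genG : X → PresentedGroup (structGroupRels op) := PresentedGroup.of

omit hRC in
lemma genG_rel (u v : X) :
    genG op u * genG op (op u v) = genG op v * genG op (op v u) := by
  have h1 : (PresentedGroup.mk (structGroupRels op))
      (FreeGroup.of u * FreeGroup.of (op u v)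
        * (FreeGroup.of v * FreeGroup.of (op v u))⁻¹) = 1 := by
    apply (QuotientGroup.eq_one_iff _).mpr
    exact Subgroup.subset_normalClosure ⟨u, v, rfl⟩
  rw [map_mul, map_inv, map_mul, map_mul, mul_inv_eq_one] at h1
  exact h1

lemma Phi_PF (l : List X) :
    Phi op hL hRC (PF (genG op) l) = ⟨Vv op hL l, PF (rho op hL) l⟩ := by
  induction l with
  | nil =>
      rw [PF_nil, map_one]
      refine Wr.ext ?_ ?_ <;> simp
  | cons x t ih =>
      rw [PF_cons, map_mul, ih]
      have : Phi op hL hRC (genG op x) = ⟨Pi.single x 1, rho op hL x⟩ := Phi_of op hL hRC x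
      rw [this]
      refine Wr.ext ?_ ?_
      · show Pi.single x 1 + pact (rho op hL x) (Vv op hL t) = Vv op hL (x :: t)
        rw [Vv_cons]
      · show rho op hL x * PF (rho op hL) t = PF (rho op hL) (x :: t)
        rw [PF_cons]

omit hRC in
/-- the λ-map on `ℤ^X` -/
noncomputable def lamZ (v : X → ℤ) : Equiv.Perm X := extF op hL (rho op hL) v

omit hRC in
/-- the inverse cocycle `ℤ^X → G` -/
noncomputable def chiZ (v : X → ℤ) : PresentedGroup (structGroupRels op) :=
  extF op hL (genG op) v

lemma lamZ_mul (a b : X → ℤ) :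
    lamZ op hL (a + pact (lamZ op hL a) b) = lamZ op hL a * lamZ op hL b :=
  extF_mul op hL hRC (rho op hL) (rho_swap op hL hRC) a b

lemma chiZ_mul (a b : X → ℤ) :
    chiZ op hL (a + pact (lamZ op hL a) b) = chiZ op hL a * chiZ op hL b :=
  extF_mul op hL hRC (genG op) (genG_rel op) a b

lemma lamZ_zero : lamZ op hL (0 : X → ℤ) = 1 := by
  rw [lamZ, extF_of_nonneg op hL hRC (rho op hL) (rho_swap op hL hRC) (le_refl _),
    liftF_zero op hL hRC (rho op hL) (rho_swap op hL hRC)]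

lemma chiZ_zero : chiZ op hL (0 : X → ℤ) = 1 := by
  rw [chiZ, extF_of_nonneg op hL hRC (genG op) (genG_rel op) (le_refl _),
    liftF_zero op hL hRC (genG op) (genG_rel op)]

omit hRC in
lemma Vv_singleton (x : X) : Vv op hL [x] = Pi.single x 1 := by
  rw [Vv_cons, Vv_nil, pact_zero, add_zero]

omit hRC in
lemma single_nonneg (x : X) : (0 : X → ℤ) ≤ Pi.single x 1 := by
  intro y
  rcases eq_or_ne y x with rfl | h
  · simp
  · simp [Pi.single_eq_of_ne h]

lemma lamZ_single (x : X) : lamZ op hL (Pi.single x 1) = rho op hL x := by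
  rw [lamZ, extF_of_nonneg op hL hRC (rho op hL) (rho_swap op hL hRC) (single_nonneg x),
    ← Vv_singleton op hL, liftF_Vv op hL hRC (rho op hL) (rho_swap op hL hRC), PF_singleton]

lemma chiZ_single (x : X) : chiZ op hL (Pi.single x 1) = genG op x := by
  rw [chiZ, extF_of_nonneg op hL hRC (genG op) (genG_rel op) (single_nonneg x),
    ← Vv_singleton op hL, liftF_Vv op hL hRC (genG op) (genG_rel op), PF_singleton]

lemma lamZ_inv (a : X → ℤ) : lamZ op hL (-pact (lamZ op hL a)⁻¹ a) = (lamZ op hL a)⁻¹ := by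
  have h := lamZ_mul op hL hRC a (-pact (lamZ op hL a)⁻¹ a)
  rw [pact_neg, ← pact_mul, mul_inv_cancel, pact_one, add_neg_cancel,
    lamZ_zero op hL hRC] at h
  exact (inv_eq_of_mul_eq_one_right h.symm).symm

/-- the image of `Phi` lies on the graph of `lamZ` -/
lemma sigma_eq_lamZ (g : PresentedGroup (structGroupRels op)) :
    (Phi op hL hRC g).s = lamZ op hL ((Phi op hL hRC g).v) := by
  set H : Subgroup (PresentedGroup (structGroupRels op)) :=
    { carrier := {g | (Phi op hL hRC g).s = lamZ op hL ((Phi op hL hRC g).v)}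
      one_mem' := by
        show (Phi op hL hRC 1).s = lamZ op hL ((Phi op hL hRC 1).v)
        rw [map_one, Wr_one_s, Wr_one_v, lamZ_zero op hL hRC]
      mul_mem' := by
        intro a b ha hb
        show (Phi op hL hRC (a*b)).s = lamZ op hL ((Phi op hL hRC (a*b)).v)
        rw [map_mul, Wr_mul_s, Wr_mul_v, ha, hb, ← lamZ_mul op hL hRC]
      inv_mem' := by
        intro a ha
        show (Phi op hL hRC a⁻¹).s = lamZ op hL ((Phi op hL hRC a⁻¹).v)
        rw [map_inv, Wr_inv_s, Wr_inv_v, ha, lamZ_inv op hL hRC] } with hH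
  have : g ∈ H := by
    apply PresentedGroup.generated_by
    intro j
    show (Phi op hL hRC (PresentedGroup.of j)).s
      = lamZ op hL ((Phi op hL hRC (PresentedGroup.of j)).v)
    rw [Phi_of op hL hRC j]
    exact (lamZ_single op hL hRC j).symm
  exact this

/-- `chiZ` is a left inverse of the cocycle -/
lemma chiZ_Phi (g : PresentedGroup (structGroupRels op)) :
    chiZ op hL ((Phi op hL hRC g).v) = g := by
  set H : Subgroup (PresentedGroup (structGroupRels op)) :=
    { carrier := {g | chiZ op hL ((Phi op hL hRC g).v) = g}
      one_mem' := by
        show chiZ op hL ((Phi op hL hRC 1).v) = 1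
        rw [map_one, Wr_one_v, chiZ_zero op hL hRC]
      mul_mem' := by
        intro a b ha hb
        show chiZ op hL ((Phi op hL hRC (a*b)).v) = a*b
        rw [map_mul, Wr_mul_v, sigma_eq_lamZ op hL hRC a, chiZ_mul op hL hRC,
          ha, hb]
      inv_mem' := by
        intro a ha
        show chiZ op hL ((Phi op hL hRC a⁻¹).v) = a⁻¹
        have h := chiZ_mul op hL hRC ((Phi op hL hRC a).v) ((Phi op hL hRC a⁻¹).v)
        rw [map_inv, Wr_inv_v, sigma_eq_lamZ op hL hRC a, pact_neg, ← pact_mul,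
          mul_inv_cancel, pact_one, add_neg_cancel, chiZ_zero op hL hRC, ha] at h
        rw [map_inv, Wr_inv_v, sigma_eq_lamZ op hL hRC a]
        exact (inv_eq_of_mul_eq_one_right h.symm).symm } with hH
  have : g ∈ H := by
    apply PresentedGroup.generated_by
    intro j
    show chiZ op hL ((Phi op hL hRC (PresentedGroup.of j)).v) = PresentedGroup.of j
    rw [Phi_of op hL hRC j]
    exact chiZ_single op hL hRC j
  exact this

omit hRC in
lemma Wr_pow_onevec (μ : Equiv.Perm X) (k : ℕ) :
    (⟨onevec, μ⟩ : Wr X) ^ k = ⟨cvec k, μ ^ k⟩ := by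
  induction k with
  | zero =>
      rw [pow_zero]
      refine Wr.ext ?_ ?_
      · show (0 : X → ℤ) = cvec 0
        rw [cvec_zero]
      · show (1 : Equiv.Perm X) = μ ^ 0
        rw [pow_zero]
  | succ k ih =>
      rw [pow_succ, ih]
      refine Wr.ext ?_ ?_
      · show cvec k + pact (μ^k) onevec = cvec (k+1)
        rw [pact_onevec, cvec_succ]
      · show μ^k * μ = μ^(k+1)
        rw [pow_succ]

/-- `Phi ∘ chiZ` is the graph map of `lamZ` -/
lemma Phi_chiZ (a : X → ℤ) :
    Phi op hL hRC (chiZ op hL a) = ⟨a, lamZ op hL a⟩ := by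
  have hgen : ∀ v : X → ℤ, 0 ≤ v →
      Phi op hL hRC (liftF op hL (genG op) v) = ⟨v, liftF op hL (rho op hL) v⟩ := by
    intro v hv
    obtain ⟨l, hl⟩ := exists_list op hL hv
    rw [← hl, liftF_Vv op hL hRC (genG op) (genG_rel op),
      liftF_Vv op hL hRC (rho op hL) (rho_swap op hL hRC), Phi_PF op hL hRC]
  rw [chiZ, extF, map_mul, map_zpow, hgen _ (Mneg_spec a),
    hgen _ (onevec_nonneg (X := X))]
  have h2 : (⟨onevec, liftF op hL (rho op hL) onevec⟩ : Wr X) ^ (-((Mneg a : ℕ) : ℤ))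
      = ⟨-cvec (Mneg a), (liftF op hL (rho op hL) onevec) ^ (-((Mneg a : ℕ) : ℤ))⟩ := by
    rw [zpow_neg, zpow_natCast, Wr_pow_onevec]
    refine Wr.ext ?_ ?_
    · show -pact ((liftF op hL (rho op hL) onevec ^ Mneg a)⁻¹) (cvec (Mneg a))
        = -cvec (Mneg a)
      rw [pact_cvec]
    · show (liftF op hL (rho op hL) onevec ^ Mneg a)⁻¹
        = liftF op hL (rho op hL) onevec ^ (-((Mneg a : ℕ) : ℤ))
      rw [zpow_neg, zpow_natCast]
  rw [h2]
  refine Wr.ext ?_ ?_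
  · show a + cvec (Mneg a) + pact (liftF op hL (rho op hL) (a + cvec (Mneg a)))
        (-cvec (Mneg a)) = a
    rw [pact_neg, pact_cvec]
    abel
  · show liftF op hL (rho op hL) (a + cvec (Mneg a))
        * (liftF op hL (rho op hL) onevec) ^ (-((Mneg a : ℕ) : ℤ)) = lamZ op hL a
    rfl

end Stmt16

end Part4
section Part5

namespace Stmt16

set_option linter.unusedSectionVars false
open scoped Classical

variable {X : Type*} [Fintype X] [DecidableEq X]
variable (op : X → X → X) (hL : ∀ x : X, Function.Bijective (op x))
  (hRC : ∀ x y z : X, op (op x y) (op x z) = op (op y x) (op y z))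

lemma SigmaRev_replicate_succ (x : X) (k : ℕ) :
    SigmaRev op (List.replicate (k+1) x)
      = SigmaRev op (List.replicate k x) ++ [PiAux op (List.replicate k x) x] := by
  rw [List.replicate_succ]
  rfl

lemma zsmul_single (k c : ℤ) (x : X) :
    k • (Pi.single x c : X → ℤ) = Pi.single x (k * c) := by
  funext y
  rcases eq_or_ne y x with rfl | h
  · simp
  · simp [Pi.single_eq_of_ne h]

lemma single_add_val (x : X) (a b : ℤ) :
    (Pi.single x a : X → ℤ) + Pi.single x b = Pi.single x (a+b) := by
  funext y
  rcases eq_or_ne y x with rfl | h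
  · simp
  · simp [Pi.single_eq_of_ne h]

lemma Sigma_V_and_point (x : X) : ∀ k : ℕ,
    Vv op hL (SigmaRev op (List.replicate k x)) = Pi.single x (k:ℤ) ∧
    (PF (rho op hL) (SigmaRev op (List.replicate k x)))
      (PiAux op (List.replicate k x) x) = x := by
  intro k
  induction k with
  | zero =>
      constructor
      · show Vv op hL [] = Pi.single x ((0:ℕ):ℤ)
        rw [Vv_nil]
        funext y
        rcases eq_or_ne y x with rfl | h
        · simp
        · simp [Pi.single_eq_of_ne h]
      · rfl
  | succ k ih =>
      obtain ⟨ihV, ihP⟩ := ih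
      have hrep : (List.replicate (k+1) x : List X) = x :: List.replicate k x :=
        List.replicate_succ
      have hPi : PiAux op (List.replicate (k+1) x) x
          = op (PiAux op (List.replicate k x) x) (PiAux op (List.replicate k x) x) := by
        rw [hrep]; rfl
      constructor
      · rw [SigmaRev_replicate_succ, Vv_append, ihV, Vv_singleton, pact_single, ihP,
          single_add_val]
        norm_num
      · rw [SigmaRev_replicate_succ, PF_append, PF_singleton, hPi]
        show (PF (rho op hL) (SigmaRev op (List.replicate k x)))
          ((rho op hL (PiAux op (List.replicate k x) x))
            (op (PiAux op (List.replicate k x) x) (PiAux op (List.replicate k x) x))) = x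
        rw [rho_op op hL, ihP]

lemma Sigma_perm_inverse (x : X) : ∀ (k : ℕ) (y : X),
    PiAux op (List.replicate k x)
      ((PF (rho op hL) (SigmaRev op (List.replicate k x))) y) = y := by
  intro k
  induction k with
  | zero => intro y; rfl
  | succ k ih =>
      intro y
      have hrep : (List.replicate (k+1) x : List X) = x :: List.replicate k x :=
        List.replicate_succ
      rw [SigmaRev_replicate_succ, PF_append, PF_singleton]
      show PiAux op (List.replicate (k+1) x)
        ((PF (rho op hL) (SigmaRev op (List.replicate k x)))
          ((rho op hL (PiAux op (List.replicate k x) x)) y)) = y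
      have hPi : ∀ z, PiAux op (List.replicate (k+1) x) z
          = op (PiAux op (List.replicate k x) x) (PiAux op (List.replicate k x) z) := by
        intro z; rw [hrep]; rfl
      rw [hPi, ih]
      exact op_rho op hL _ y

lemma Sigma_perm_one (p : ℕ)
    (hclass : ∀ x y : X, PiAux op (List.replicate p x) y = y) (x : X) :
    PF (rho op hL) (SigmaRev op (List.replicate p x)) = 1 := by
  apply Equiv.ext
  intro y
  have h1 := Sigma_perm_inverse op hL x p y
  rw [hclass x _] at h1
  simpa using h1

include hRC

lemma Phi_gSx (p : ℕ)
    (hclass : ∀ x y : X, PiAux op (List.replicate p x) y = y) (x : X) :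
    Phi op hL hRC (PF (genG op) (SigmaRev op (List.replicate p x)))
      = ⟨Pi.single x (p:ℤ), 1⟩ := by
  rw [Phi_PF op hL hRC, (Sigma_V_and_point op hL x p).1,
    Sigma_perm_one op hL p hclass x]

omit hRC in
lemma single_p_nonneg (p : ℕ) (x : X) : (0:X → ℤ) ≤ Pi.single x (p:ℤ) := by
  intro y
  rcases eq_or_ne y x with rfl | h
  · simp
  · simp [Pi.single_eq_of_ne h]

lemma lamZ_single_p (p : ℕ)
    (hclass : ∀ x y : X, PiAux op (List.replicate p x) y = y) (x : X) : lamZ op hL (Pi.single x (p:ℤ)) = 1 := by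
  rw [lamZ, extF_of_nonneg op hL hRC (rho op hL) (rho_swap op hL hRC)
    (single_p_nonneg p x), ← (Sigma_V_and_point op hL x p).1,
    liftF_Vv op hL hRC (rho op hL) (rho_swap op hL hRC),
    Sigma_perm_one op hL p hclass x]

lemma chiZ_single_p (p : ℕ)
    (hclass : ∀ x y : X, PiAux op (List.replicate p x) y = y) (x : X) :
    chiZ op hL (Pi.single x (p:ℤ)) = PF (genG op) (SigmaRev op (List.replicate p x)) := by
  have h := chiZ_Phi op hL hRC (PF (genG op) (SigmaRev op (List.replicate p x)))
  rw [Phi_gSx op hL hRC p hclass x] at h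
  exact h

-- U machinery ------------------------------------------------------------

lemma lamZ_one_add {a b : X → ℤ} (ha : lamZ op hL a = 1) (hb : lamZ op hL b = 1) :
    lamZ op hL (a + b) = 1 := by
  have h := lamZ_mul op hL hRC a b
  rw [ha, hb, pact_one, mul_one] at h
  exact h

lemma lamZ_one_neg {a : X → ℤ} (ha : lamZ op hL a = 1) : lamZ op hL (-a) = 1 := by
  have h := lamZ_inv op hL hRC a
  rw [ha] at h
  simpa using h

lemma chiZ_add_of_lam_one {a : X → ℤ} (b : X → ℤ) (ha : lamZ op hL a = 1) :
    chiZ op hL (a + b) = chiZ op hL a * chiZ op hL b := by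
  have h := chiZ_mul op hL hRC a b
  rw [ha, pact_one] at h
  exact h

lemma lamZ_one_zsmul {v : X → ℤ} (hv : lamZ op hL v = 1) (k : ℤ) :
    lamZ op hL (k • v) = 1 := by
  induction k using Int.induction_on with
  | zero => simpa using lamZ_zero op hL hRC
  | succ i ih =>
      have : ((i:ℤ)+1) • v = (i:ℤ) • v + v := by rw [add_smul, one_smul]
      rw [this]
      exact lamZ_one_add op hL hRC ih hv
  | pred i ih =>
      have : (-(i:ℤ)-1) • v = (-(i:ℤ)) • v + (-v) := by
        rw [sub_smul, one_smul, sub_eq_add_neg]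
      rw [this]
      exact lamZ_one_add op hL hRC ih (lamZ_one_neg op hL hRC hv)

lemma chiZ_zsmul {v : X → ℤ} (hv : lamZ op hL v = 1) (k : ℤ) :
    chiZ op hL (k • v) = (chiZ op hL v) ^ k := by
  induction k using Int.induction_on with
  | zero => simpa using chiZ_zero op hL hRC
  | succ i ih =>
      have h1 : ((i:ℤ)+1) • v = (i:ℤ) • v + v := by rw [add_smul, one_smul]
      rw [h1, chiZ_add_of_lam_one op hL hRC v (lamZ_one_zsmul op hL hRC hv i), ih,
        zpow_add_one]
  | pred i ih =>
      have h1 : (-(i:ℤ)) • v = (-(i:ℤ)-1) • v + v := by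
        rw [sub_smul, one_smul, sub_add_cancel]
      have h2 := chiZ_add_of_lam_one op hL hRC v
        (lamZ_one_zsmul op hL hRC hv (-(i:ℤ)-1))
      rw [← h1] at h2
      rw [ih] at h2
      have h3 : chiZ op hL ((-(i:ℤ)-1) • v) = chiZ op hL v ^ (-(i:ℤ)) * (chiZ op hL v)⁻¹ := by
        rw [h2]
        group
      rw [h3, ← zpow_sub_one]

lemma lamZ_one_sum (f : X → (X → ℤ)) (hf : ∀ i, lamZ op hL (f i) = 1) (s : Finset X) :
    lamZ op hL (∑ i ∈ s, f i) = 1 := by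
  induction s using Finset.induction_on with
  | empty => simpa using lamZ_zero op hL hRC
  | insert _ _ hnotmem ih =>
      rw [Finset.sum_insert hnotmem]
      exact lamZ_one_add op hL hRC (hf _) ih

lemma chiZ_sum_mem (T : Set (PresentedGroup (structGroupRels op)))
    (f : X → (X → ℤ)) (hf : ∀ i, lamZ op hL (f i) = 1)
    (hmem : ∀ i, chiZ op hL (f i) ∈ Subgroup.closure T) (s : Finset X) :
    chiZ op hL (∑ i ∈ s, f i) ∈ Subgroup.closure T := by
  induction s using Finset.induction_on with
  | empty =>
      have h0 : chiZ op hL (∑ i ∈ (∅ : Finset X), f i) = 1 := by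
        simpa using chiZ_zero op hL hRC
      rw [h0]
      exact Subgroup.one_mem _
  | insert _ _ hnotmem ih =>
      rw [Finset.sum_insert hnotmem, chiZ_add_of_lam_one op hL hRC _ (hf _)]
      exact Subgroup.mul_mem _ (hmem _) ih

omit hRC in
lemma single_eq_zsmul_single_p (p : ℕ) {c : ℤ} (hc : (p:ℤ) ∣ c) (x : X) :
    (Pi.single x c : X → ℤ) = (c / p) • Pi.single x (p:ℤ) := by
  rw [zsmul_single, Int.ediv_mul_cancel hc]

lemma lamZ_p_dvd (p : ℕ)
    (hclass : ∀ x y : X, PiAux op (List.replicate p x) y = y)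
    {a : X → ℤ} (ha : ∀ x, (p:ℤ) ∣ a x) : lamZ op hL a = 1 := by
  have hdecomp : a = ∑ x, Pi.single x (a x) := (Finset.univ_sum_single a).symm
  rw [hdecomp]
  apply lamZ_one_sum op hL hRC
  intro i
  rw [single_eq_zsmul_single_p p (ha i) i]
  exact lamZ_one_zsmul op hL hRC (lamZ_single_p op hL hRC p hclass i) _

end Stmt16

end Part5
section Part6

namespace Stmt16

set_option linter.unusedSectionVars false
open scoped Classical

variable {X : Type*} [Fintype X] [DecidableEq X]
variable (op : X → X → X) (hL : ∀ x : X, Function.Bijective (op x))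
  (hRC : ∀ x y z : X, op (op x y) (op x z) = op (op y x) (op y z))

/-- the congruence kernel: elements whose cocycle vector is divisible by `p` -/
noncomputable def Ksub (p : ℕ) : Subgroup (PresentedGroup (structGroupRels op)) where
  carrier := {g | ∀ x : X, (p:ℤ) ∣ (Phi op hL hRC g).v x}
  one_mem' := by
    intro x
    rw [map_one, Wr_one_v]
    simp
  mul_mem' := by
    intro a b ha hb x
    rw [map_mul, Wr_mul_v]
    show (p:ℤ) ∣ (Phi op hL hRC a).v x + (Phi op hL hRC b).v _
    exact dvd_add (ha x) (hb _)
  inv_mem' := by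
    intro a ha x
    rw [map_inv, Wr_inv_v]
    show (p:ℤ) ∣ -(Phi op hL hRC a).v _
    exact dvd_neg.mpr (ha _)

lemma mem_Ksub {p : ℕ} {g : PresentedGroup (structGroupRels op)} :
    g ∈ Ksub op hL hRC p ↔ ∀ x : X, (p:ℤ) ∣ (Phi op hL hRC g).v x := Iff.rfl

/-- reduction of the cocycle mod `p` -/
noncomputable def fmodG (p : ℕ) :
    PresentedGroup (structGroupRels op) → (X → ZMod p) :=
  fun g x => (((Phi op hL hRC g).v x : ℤ) : ZMod p)

lemma fmodG_apply (p : ℕ) (g : PresentedGroup (structGroupRels op)) (x : X) :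
    fmodG op hL hRC p g x = (((Phi op hL hRC g).v x : ℤ) : ZMod p) := rfl

include hRC

lemma closure_eq_Ksub (p : ℕ)
    (hclass : ∀ x y : X, PiAux op (List.replicate p x) y = y) :
    Subgroup.closure
      {g | ∃ x : X, g = ((SigmaRev op (List.replicate p x)).map
        (PresentedGroup.of (rels := structGroupRels op))).prod}
      = Ksub op hL hRC p := by
  have hsetrw : {g | ∃ x : X, g = ((SigmaRev op (List.replicate p x)).map
        (PresentedGroup.of (rels := structGroupRels op))).prod}
      = {g | ∃ x : X, g = PF (genG op) (SigmaRev op (List.replicate p x))} := rfl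
  rw [hsetrw]
  apply le_antisymm
  · rw [Subgroup.closure_le]
    rintro g ⟨x, rfl⟩
    intro y
    rw [Phi_gSx op hL hRC p hclass x]
    show (p:ℤ) ∣ (Pi.single x (p:ℤ) : X → ℤ) y
    rcases eq_or_ne y x with rfl | h
    · simp
    · simp [Pi.single_eq_of_ne h]
  · intro g hg
    have hgv := hg
    rw [mem_Ksub] at hgv
    rw [← chiZ_Phi op hL hRC g]
    have hdecomp : (Phi op hL hRC g).v
        = ∑ i, Pi.single i ((Phi op hL hRC g).v i) :=
      (Finset.univ_sum_single _).symm
    rw [hdecomp]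
    apply chiZ_sum_mem op hL hRC
    · intro i
      rw [single_eq_zsmul_single_p p (hgv i) i]
      exact lamZ_one_zsmul op hL hRC (lamZ_single_p op hL hRC p hclass i) _
    · intro i
      rw [single_eq_zsmul_single_p p (hgv i) i,
        chiZ_zsmul op hL hRC (lamZ_single_p op hL hRC p hclass i),
        chiZ_single_p op hL hRC p hclass i]
      refine Subgroup.zpow_mem _ (Subgroup.subset_closure ?_) _
      exact ⟨i, rfl⟩

lemma Ksub_normal (p : ℕ)
    (hclass : ∀ x y : X, PiAux op (List.replicate p x) y = y) :
    (Ksub op hL hRC p).Normal := by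
  constructor
  intro n hn g
  rw [mem_Ksub] at hn ⊢
  intro x
  have hτ : (Phi op hL hRC n).s = 1 := by
    rw [sigma_eq_lamZ op hL hRC n]
    exact lamZ_p_dvd op hL hRC p hclass hn
  rw [map_mul, map_mul, map_inv]
  have hval : ((Phi op hL hRC g * Phi op hL hRC n * (Phi op hL hRC g)⁻¹).v : X → ℤ)
      = (Phi op hL hRC g).v + pact (Phi op hL hRC g).s (Phi op hL hRC n).v
        + pact ((Phi op hL hRC g).s * (Phi op hL hRC n).s)
            (-pact (Phi op hL hRC g).s⁻¹ (Phi op hL hRC g).v) := by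
    rw [Wr_mul_v, Wr_mul_v, Wr_inv_v, Wr_mul_s]
  rw [hval, hτ, mul_one, pact_neg, ← pact_mul, mul_inv_cancel, pact_one]
  have harith : ((Phi op hL hRC g).v + pact (Phi op hL hRC g).s (Phi op hL hRC n).v
      + -(Phi op hL hRC g).v) x
      = (Phi op hL hRC n).v ((Phi op hL hRC g).s.symm x) := by
    show (Phi op hL hRC g).v x + (Phi op hL hRC n).v ((Phi op hL hRC g).s.symm x)
      + -((Phi op hL hRC g).v x) = _
    ring
  rw [harith]
  exact hn _

lemma Ksub_iso (p : ℕ) (hp0 : p ≠ 0)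
    (hclass : ∀ x y : X, PiAux op (List.replicate p x) y = y) :
    Nonempty ((Ksub op hL hRC p) ≃* Multiplicative (X → ℤ)) := by
  have hsig : ∀ g ∈ Ksub op hL hRC p, (Phi op hL hRC g).s = 1 := by
    intro g hg
    rw [sigma_eq_lamZ op hL hRC g]
    exact lamZ_p_dvd op hL hRC p hclass hg
  have hmul : ∀ a b : (Ksub op hL hRC p),
      (fun (g : Ksub op hL hRC p) => Multiplicative.ofAdd
        (fun x => (Phi op hL hRC g.1).v x / (p:ℤ))) (a * b)
      = (fun (g : Ksub op hL hRC p) => Multiplicative.ofAdd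
        (fun x => (Phi op hL hRC g.1).v x / (p:ℤ))) a
        * (fun (g : Ksub op hL hRC p) => Multiplicative.ofAdd
        (fun x => (Phi op hL hRC g.1).v x / (p:ℤ))) b := by
    intro a b
    show Multiplicative.ofAdd _ = Multiplicative.ofAdd _ * Multiplicative.ofAdd _
    rw [← ofAdd_add]
    congr 1
    funext x
    have hab : ((a * b : Ksub op hL hRC p) : PresentedGroup (structGroupRels op))
        = (a : PresentedGroup (structGroupRels op)) * b := rfl
    show (Phi op hL hRC ((a*b : Ksub op hL hRC p) : PresentedGroup
        (structGroupRels op))).v x / (p:ℤ) = _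
    rw [hab, map_mul, Wr_mul_v, hsig a a.2, pact_one]
    show ((Phi op hL hRC a.1).v x + (Phi op hL hRC b.1).v x) / (p:ℤ)
      = (Phi op hL hRC a.1).v x / (p:ℤ) + (Phi op hL hRC b.1).v x / (p:ℤ)
    exact Int.add_ediv_of_dvd_left (a.2 x)
  set f : (Ksub op hL hRC p) →* Multiplicative (X → ℤ) :=
    MonoidHom.mk' (fun (g : Ksub op hL hRC p) => Multiplicative.ofAdd
      (fun x => (Phi op hL hRC g.1).v x / (p:ℤ))) hmul with hf
  have hinj : Function.Injective f := by
    intro a b hab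
    have h1 : ∀ x, (Phi op hL hRC a.1).v x / (p:ℤ) = (Phi op hL hRC b.1).v x / (p:ℤ) :=
      fun x => congrFun (Multiplicative.ofAdd.injective hab) x
    have h2 : (Phi op hL hRC a.1).v = (Phi op hL hRC b.1).v := by
      funext x
      have ha := Int.ediv_mul_cancel (a.2 x)
      have hb := Int.ediv_mul_cancel (b.2 x)
      rw [← ha, ← hb, h1 x]
    apply Subtype.ext
    rw [← chiZ_Phi op hL hRC a.1, ← chiZ_Phi op hL hRC b.1, h2]
  have hsurj : Function.Surjective f := by
    intro b
    set w : X → ℤ := fun x => (p:ℤ) * (Multiplicative.toAdd b x) with hw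
    have hmem : chiZ op hL w ∈ Ksub op hL hRC p := by
      rw [mem_Ksub]
      intro x
      rw [Phi_chiZ op hL hRC w]
      exact ⟨Multiplicative.toAdd b x, rfl⟩
    refine ⟨⟨chiZ op hL w, hmem⟩, ?_⟩
    show Multiplicative.ofAdd (fun x => (Phi op hL hRC (chiZ op hL w)).v x / (p:ℤ)) = b
    rw [Phi_chiZ op hL hRC w]
    have hbb : (fun x => w x / (p:ℤ)) = Multiplicative.toAdd b := by
      funext x
      rw [hw]
      exact Int.mul_ediv_cancel_left _ (by exact_mod_cast hp0)
    rw [hbb]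
    simp
  exact ⟨MulEquiv.ofBijective f ⟨hinj, hsurj⟩⟩

lemma fmodG_key (p : ℕ) (g h : PresentedGroup (structGroupRels op)) :
    fmodG op hL hRC p g = fmodG op hL hRC p h ↔ g⁻¹ * h ∈ Ksub op hL hRC p := by
  have hv : ∀ x, (Phi op hL hRC (g⁻¹ * h)).v x
      = ((Phi op hL hRC h).v - (Phi op hL hRC g).v) ((Phi op hL hRC g).s x) := by
    intro x
    rw [map_mul, map_inv]
    show ((Phi op hL hRC g)⁻¹.v + pact (Phi op hL hRC g)⁻¹.s (Phi op hL hRC h).v) x = _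
    rw [Wr_inv_v, Wr_inv_s]
    show -(Phi op hL hRC g).v (((Phi op hL hRC g).s⁻¹).symm x)
      + (Phi op hL hRC h).v (((Phi op hL hRC g).s⁻¹).symm x) = _
    have hss : ((Phi op hL hRC g).s⁻¹).symm x = (Phi op hL hRC g).s x := rfl
    rw [hss, Pi.sub_apply]
    ring
  constructor
  · intro heq
    rw [mem_Ksub]
    intro x
    rw [hv x]
    have h2 := congrFun heq ((Phi op hL hRC g).s x)
    rw [fmodG_apply, fmodG_apply] at h2
    have h1 : ((((Phi op hL hRC h).v - (Phi op hL hRC g).v)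
        ((Phi op hL hRC g).s x) : ℤ) : ZMod p) = 0 := by
      rw [Pi.sub_apply]
      push_cast
      rw [sub_eq_zero]
      exact h2.symm
    exact (ZMod.intCast_zmod_eq_zero_iff_dvd _ p).mp h1
  · intro hmem
    rw [mem_Ksub] at hmem
    funext x
    have h1 := hmem ((Phi op hL hRC g).s.symm x)
    rw [hv _, Equiv.apply_symm_apply] at h1
    have h2 : ((((Phi op hL hRC h).v - (Phi op hL hRC g).v) x : ℤ) : ZMod p) = 0 :=
      (ZMod.intCast_zmod_eq_zero_iff_dvd _ p).mpr h1
    rw [Pi.sub_apply] at h2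
    push_cast at h2
    rw [sub_eq_zero] at h2
    rw [fmodG_apply, fmodG_apply]
    exact h2.symm

lemma Ksub_card (p : ℕ) (hp0 : p ≠ 0) :
    Nat.card (PresentedGroup (structGroupRels op) ⧸ Ksub op hL hRC p)
      = p ^ Fintype.card X := by
  haveI : NeZero p := ⟨hp0⟩
  have hlift : ∀ a b : PresentedGroup (structGroupRels op),
      (QuotientGroup.leftRel (Ksub op hL hRC p)) a b →
      fmodG op hL hRC p a = fmodG op hL hRC p b := by
    intro a b hab
    exact (fmodG_key op hL hRC p a b).mpr (QuotientGroup.leftRel_apply.mp hab)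
  set e : (PresentedGroup (structGroupRels op) ⧸ Ksub op hL hRC p) ≃ (X → ZMod p) :=
    { toFun := fun q => Quotient.liftOn' q (fmodG op hL hRC p) hlift
      invFun := fun v => QuotientGroup.mk (chiZ op hL (fun x => ((v x).val : ℤ)))
      left_inv := by
        intro q
        induction q using Quotient.inductionOn' with
        | h g =>
            have hq : (Quotient.mk'' g : PresentedGroup (structGroupRels op)
              ⧸ Ksub op hL hRC p) = QuotientGroup.mk g := rfl
            have htf : Quotient.liftOn' (Quotient.mk'' g) (fmodG op hL hRC p) hlift
                = fmodG op hL hRC p g := rfl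
            show QuotientGroup.mk (chiZ op hL
              (fun x => (((Quotient.liftOn' (Quotient.mk'' g) (fmodG op hL hRC p)
                hlift) x).val : ℤ))) = Quotient.mk'' g
            rw [htf, hq, QuotientGroup.eq]
            apply (fmodG_key op hL hRC p _ _).mp
            funext x
            rw [fmodG_apply, Phi_chiZ op hL hRC]
            rw [Int.cast_natCast, ZMod.natCast_val, ZMod.cast_id]
      right_inv := by
        intro v
        show Quotient.liftOn' (QuotientGroup.mk (chiZ op hL (fun x => ((v x).val : ℤ))))
          (fmodG op hL hRC p) hlift = v
        have htf : Quotient.liftOn' (QuotientGroup.mk (chiZ op hL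
            (fun x => ((v x).val : ℤ)))) (fmodG op hL hRC p) hlift
            = fmodG op hL hRC p (chiZ op hL (fun x => ((v x).val : ℤ))) := rfl
        rw [htf]
        funext x
        rw [fmodG_apply, Phi_chiZ op hL hRC]
        rw [Int.cast_natCast, ZMod.natCast_val, ZMod.cast_id] }
    with he
  rw [Nat.card_congr e, Nat.card_pi]
  simp [Nat.card_zmod]

end Stmt16

end Part6
/-- let `G` be the structure group of a finite RC-quasigroup of size `n` and
class `p ≥ 2`, and let `S` be the subgroup of `G` generated by the `n` elements
`x^{[p]}` (the image in `G` of the length-`p` word `Σ_p(x,...,x)`). Then `S` is normal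
(it is the kernel of the congruence `≡`), `S` is free Abelian of rank `n` (isomorphic to
`ℤⁿ`), and the quotient `W = G/S` has order `pⁿ`: there is a short exact sequence
`1 → ℤⁿ → G → W → 1` with `|W| = pⁿ`. -/
theorem stmt16 {X : Type*} [Fintype X] [DecidableEq X] (op : X → X → X)
    (hRC : ∀ x y z : X, op (op x y) (op x z) = op (op y x) (op y z))
    (hL : ∀ x : X, Function.Bijective (op x))
    (p : ℕ) (hp : 2 ≤ p)
    (hclass : ∀ x y : X, PiAux op (List.replicate p x) y = y)
    (S : Subgroup (PresentedGroup (structGroupRels op)))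
    (hS : S = Subgroup.closure
      {g | ∃ x : X, g = ((SigmaRev op (List.replicate p x)).map
        (PresentedGroup.of (rels := structGroupRels op))).prod}) :
    S.Normal ∧ Nonempty (S ≃* Multiplicative (X → ℤ)) ∧
      Nat.card (PresentedGroup (structGroupRels op) ⧸ S) = p ^ Fintype.card X := by
  have hp0 : p ≠ 0 := by omega
  have hSeq : S = Stmt16.Ksub op hL hRC p := by
    rw [hS, Stmt16.closure_eq_Ksub op hL hRC p hclass]
  subst hSeq
  exact ⟨Stmt16.Ksub_normal op hL hRC p hclass, Stmt16.Ksub_iso op hL hRC p hp0 hclass,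
    Stmt16.Ksub_card op hL hRC p hp0⟩
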